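/- arXiv:1806.02754 — 2 statements merged into one kernel-verified Lean document; each statement's English description precedes it below -/
import Mathlib

section
/- Let X be a Gamma-distributed random variable with shape parameter k_s and scale σ_h², and let Z be an independent random variable with ‖Z‖² Gamma-distributed with shape m and scale σ² (i.e., the squared norm of an m-dimensional complex Gaussian vector of per-entry variance σ²). Then P(‖Z‖² ≥ X) = (σ²/(σ² + σ_h²))^{k_s} · ∑_{j=0}^{m-1} (Γ(k_s+j)/(Γ(k_s) j!)) · (σ_h²/(σ²+σ_h²))^{j}. -/
open MeasureTheory ProbabilityTheory Real Set Filter Topology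

namespace Stmt3Aux

lemma hasDerivAt_S (n : ℕ) (r t : ℝ) :
    HasDerivAt (fun t => ∑ j ∈ Finset.range (n+1), (r*t)^j / (Nat.factorial j : ℝ))
      (r * ∑ j ∈ Finset.range n, (r*t)^j / (Nat.factorial j : ℝ)) t := by
  have h : ∀ j ∈ Finset.range (n+1),
      HasDerivAt (fun t => (r*t)^j / (Nat.factorial j : ℝ))
        ((j : ℝ) * (r*t)^(j-1) * r / (Nat.factorial j : ℝ)) t := by
    intro j _
    simpa using (((hasDerivAt_id t).const_mul r).pow j).div_const (Nat.factorial j : ℝ)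
  have h2 := HasDerivAt.fun_sum h
  refine h2.congr_deriv ?_
  symm
  rw [Finset.sum_range_succ']
  simp only [Nat.cast_zero, zero_mul, Nat.factorial_zero, Nat.cast_one, zero_div, add_zero]
  rw [Finset.mul_sum]
  refine Finset.sum_congr rfl fun i _ => ?_
  have : (Nat.factorial (i+1) : ℝ) = (i+1) * Nat.factorial i := by
    push_cast [Nat.factorial_succ]; ring
  rw [this]
  field_simp
  rw [Nat.add_sub_cancel]
  push_cast
  ring

lemma pdf_eq (n : ℕ) {r : ℝ} (hr : 0 < r) {t : ℝ} (ht : 0 ≤ t) :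
    gammaPDFReal ((n+1 : ℕ) : ℝ) r t
      = r * ((r*t)^n / (Nat.factorial n : ℝ)) * Real.exp (-(r*t)) := by
  rw [gammaPDFReal, if_pos ht]
  have h1 : r ^ (((n+1 : ℕ) : ℝ)) = r ^ (n+1) := by
    rw [Real.rpow_natCast]
  have h2 : t ^ ((((n+1 : ℕ) : ℝ)) - 1) = t ^ n := by
    have : (((n+1 : ℕ) : ℝ)) - 1 = (n : ℝ) := by push_cast; ring
    rw [this, Real.rpow_natCast]
  have h3 : Real.Gamma (((n+1 : ℕ) : ℝ)) = (Nat.factorial n : ℝ) := by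
    push_cast
    exact Real.Gamma_nat_eq_factorial n
  rw [h1, h2, h3, mul_pow, pow_succ]
  have : (Nat.factorial n : ℝ) ≠ 0 := by exact_mod_cast (Nat.factorial_pos n).ne'
  field_simp

lemma integrableOn_pow_mul_exp_neg {n : ℕ} {b : ℝ} (hb : 0 < b) :
    IntegrableOn (fun x : ℝ => x ^ n * Real.exp (-(b * x))) (Ioi 0) := by
  have h := integrableOn_rpow_mul_exp_neg_mul_rpow (s := (n : ℝ)) (p := 1)
    (by exact_mod_cast neg_one_lt_zero.trans_le (Nat.cast_nonneg n)) one_pos hb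
  refine h.congr_fun (fun x hx => ?_) measurableSet_Ioi
  dsimp only
  rw [Real.rpow_one, neg_mul, Real.rpow_natCast]

lemma integrableOn_pdf_Ioi (n : ℕ) {r : ℝ} (hr : 0 < r) {x : ℝ} (hx : 0 ≤ x) :
    IntegrableOn (gammaPDFReal ((n+1 : ℕ) : ℝ) r) (Ioi x) := by
  have h0 : IntegrableOn (fun t : ℝ => r ^ (n+1) / (Nat.factorial n : ℝ) * (t ^ n * Real.exp (-(r * t)))) (Ioi 0) :=
    (integrableOn_pow_mul_exp_neg (n := n) hr).const_mul _
  have h := h0.mono_set (Ioi_subset_Ioi hx)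
  refine h.congr_fun (fun t ht => ?_) measurableSet_Ioi
  have ht' : 0 ≤ t := le_of_lt (lt_of_le_of_lt hx ht)
  rw [pdf_eq n hr ht', mul_pow]
  ring

lemma integral_tail (n : ℕ) {r : ℝ} (hr : 0 < r) {x : ℝ} (hx : 0 ≤ x) :
    ∫ t in Ioi x, gammaPDFReal ((n+1 : ℕ) : ℝ) r t
      = Real.exp (-(r*x)) * ∑ j ∈ Finset.range (n+1), (r*x)^j / (Nat.factorial j : ℝ) := by
  set F : ℝ → ℝ := fun t =>
    -(Real.exp (-(r*t)) * ∑ j ∈ Finset.range (n+1), (r*t)^j / (Nat.factorial j : ℝ)) with hF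
  have hderiv : ∀ t ∈ Ici x, HasDerivAt F (gammaPDFReal ((n+1 : ℕ) : ℝ) r t) t := by
    intro t ht
    have hexp : HasDerivAt (fun t => Real.exp (-(r*t))) (Real.exp (-(r*t)) * (-r)) t := by
      simpa using (((hasDerivAt_id t).const_mul r).neg).exp
    have hmul := (hexp.fun_mul (hasDerivAt_S n r t)).fun_neg
    refine hmul.congr_deriv ?_
    symm
    rw [pdf_eq n hr (le_trans hx ht), Finset.sum_range_succ]
    ring
  have htend : Tendsto F atTop (𝓝 0) := by
    have h1 : ∀ j : ℕ, Tendsto (fun t => Real.exp (-(r*t)) * ((r*t)^j / (Nat.factorial j : ℝ)))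
        atTop (𝓝 0) := by
      intro j
      have hc : Tendsto (fun t : ℝ => r * t) atTop atTop :=
        Tendsto.const_mul_atTop hr tendsto_id
      have := ((tendsto_pow_mul_exp_neg_atTop_nhds_zero j).comp hc).div_const
        (Nat.factorial j : ℝ)
      rw [zero_div] at this
      refine this.congr fun t => ?_
      simp [Function.comp]
      ring
    have h2 : Tendsto (fun t => Real.exp (-(r*t)) *
        ∑ j ∈ Finset.range (n+1), (r*t)^j / (Nat.factorial j : ℝ)) atTop (𝓝 0) := by
      have := tendsto_finset_sum (Finset.range (n+1)) (fun j _ => h1 j)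
      simp only [Finset.sum_const_zero] at this
      refine this.congr fun t => ?_
      rw [Finset.mul_sum]
    simpa [hF] using h2.neg
  have := integral_Ioi_of_hasDerivAt_of_tendsto' hderiv (integrableOn_pdf_Ioi n hr hx) htend
  rw [this, hF]
  ring

lemma gammaMeasure_Ici (n : ℕ) {r : ℝ} (hr : 0 < r) {x : ℝ} (hx : 0 ≤ x) :
    gammaMeasure ((n+1 : ℕ) : ℝ) r (Ici x)
      = ENNReal.ofReal (Real.exp (-(r*x)) *
          ∑ j ∈ Finset.range (n+1), (r*x)^j / (Nat.factorial j : ℝ)) := by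
  have hpos : (0 : ℝ) < ((n+1 : ℕ) : ℝ) := by exact_mod_cast Nat.succ_pos n
  rw [gammaMeasure, withDensity_apply _ measurableSet_Ici]
  have hint : IntegrableOn (gammaPDFReal ((n+1 : ℕ) : ℝ) r) (Ici x) := by
    rw [integrableOn_Ici_iff_integrableOn_Ioi]
    exact integrableOn_pdf_Ioi n hr hx
  have hnn : 0 ≤ᵐ[volume.restrict (Ici x)] gammaPDFReal ((n+1 : ℕ) : ℝ) r :=
    ae_of_all _ fun t => gammaPDFReal_nonneg hpos hr t
  have := ofReal_integral_eq_lintegral_ofReal hint hnn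
  rw [← integral_tail n hr hx, ← integral_Ici_eq_integral_Ioi, this]
  rfl

lemma main_integral (k n : ℕ) {σh σ : ℝ} (hσh : 0 < σh) (hσ : 0 < σ) :
    ∫ x in Ioi (0:ℝ), gammaPDFReal ((k+1 : ℕ) : ℝ) (σh^2)⁻¹ x *
        (Real.exp (-((σ^2)⁻¹ * x)) *
          ∑ j ∈ Finset.range (n+1), ((σ^2)⁻¹ * x)^j / (Nat.factorial j : ℝ))
      = (σ ^ 2 / (σ ^ 2 + σh ^ 2)) ^ (k+1) *
          ∑ j ∈ Finset.range (n+1),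
            Real.Gamma (((k+1 : ℕ) : ℝ) + (j : ℝ)) /
                (Real.Gamma ((k+1 : ℕ) : ℝ) * (Nat.factorial j : ℝ)) *
              (σh ^ 2 / (σ ^ 2 + σh ^ 2)) ^ j := by
  set rh : ℝ := (σh^2)⁻¹ with hrh_def
  set rY : ℝ := (σ^2)⁻¹ with hrY_def
  have hrh : 0 < rh := by positivity
  have hrY : 0 < rY := by positivity
  set lam : ℝ := rh + rY with hlam_def
  have hlam : 0 < lam := by positivity
  set C : ℕ → ℝ := fun j => rh^(k+1) * rY^j / ((Nat.factorial k : ℝ) * (Nat.factorial j : ℝ))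
    with hC_def
  have hg : ∀ x ∈ Ioi (0:ℝ),
      gammaPDFReal ((k+1 : ℕ) : ℝ) rh x *
        (Real.exp (-(rY * x)) * ∑ j ∈ Finset.range (n+1), (rY * x)^j / (Nat.factorial j : ℝ))
      = ∑ j ∈ Finset.range (n+1), C j * (x ^ ((k+1+j : ℕ) : ℝ) * Real.exp (-(lam * x)) / x) := by
    intro x hx
    have hx0 : (0:ℝ) < x := hx
    rw [pdf_eq k hrh hx0.le, Finset.mul_sum, Finset.mul_sum]
    refine Finset.sum_congr rfl fun j _ => ?_
    have he : Real.exp (-(lam * x)) = Real.exp (-(rh*x)) * Real.exp (-(rY*x)) := by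
      rw [← Real.exp_add]; congr 1; rw [hlam_def]; ring
    have hxp : x ^ ((k+1+j : ℕ) : ℝ) = x ^ (k+1+j) := Real.rpow_natCast x _
    rw [he, hxp, hC_def]
    have hk : (Nat.factorial k : ℝ) ≠ 0 := by exact_mod_cast (Nat.factorial_pos k).ne'
    have hj : (Nat.factorial j : ℝ) ≠ 0 := by exact_mod_cast (Nat.factorial_pos j).ne'
    field_simp
    ring
  rw [setIntegral_congr_fun measurableSet_Ioi hg]
  have hint : ∀ j ∈ Finset.range (n+1), IntegrableOn
      (fun x : ℝ => C j * (x ^ ((k+1+j : ℕ) : ℝ) * Real.exp (-(lam * x)) / x)) (Ioi 0) := by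
    intro j _
    have h0 : IntegrableOn (fun x : ℝ => x ^ (k+j) * Real.exp (-(lam * x))) (Ioi 0) :=
      integrableOn_pow_mul_exp_neg hlam
    have h1 : IntegrableOn (fun x : ℝ => C j * (x ^ (k+j) * Real.exp (-(lam * x)))) (Ioi 0) :=
      h0.const_mul _
    refine h1.congr_fun (fun x hx => ?_) measurableSet_Ioi
    have hx0 : (0:ℝ) < x := hx
    rw [Real.rpow_natCast]
    rw [show (k+1+j) = (k+j)+1 by ring, pow_succ]
    field_simp
  rw [integral_finset_sum _ hint]
  have hval : ∀ j ∈ Finset.range (n+1),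
      ∫ x in Ioi (0:ℝ), C j * (x ^ ((k+1+j : ℕ) : ℝ) * Real.exp (-(lam * x)) / x)
        = C j * ((1/lam) ^ ((k+1+j : ℕ) : ℝ) * Real.Gamma ((k+1+j : ℕ) : ℝ)) := by
    intro j _
    rw [integral_const_mul]
    congr 1
    rw [← integral_rpow_mul_exp_neg_mul_Ioi (a := ((k+1+j : ℕ) : ℝ))
      (by exact_mod_cast (by omega : 0 < k+1+j)) hlam]
    · refine setIntegral_congr_fun measurableSet_Ioi (fun x hx => ?_)
      have hx0 : (0:ℝ) < x := hx
      rw [Real.rpow_sub hx0, Real.rpow_one]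
      ring
  rw [Finset.sum_congr rfl hval, Finset.mul_sum]
  refine Finset.sum_congr rfl fun j _ => ?_
  have h1 : (1/lam) ^ ((k+1+j : ℕ) : ℝ) = (1/lam) ^ (k+1+j) := Real.rpow_natCast _ _
  have h2 : Real.Gamma ((k+1+j : ℕ) : ℝ) = (Nat.factorial (k+j) : ℝ) := by
    have : ((k+1+j : ℕ) : ℝ) = ((k+j : ℕ) : ℝ) + 1 := by push_cast; ring
    rw [this, Real.Gamma_nat_eq_factorial]
  have h3 : Real.Gamma (((k+1 : ℕ) : ℝ)) = (Nat.factorial k : ℝ) := by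
    push_cast; exact Real.Gamma_nat_eq_factorial k
  have h4 : Real.Gamma (((k+1 : ℕ) : ℝ) + (j : ℝ)) = (Nat.factorial (k+j) : ℝ) := by
    have : (((k+1 : ℕ) : ℝ)) + (j : ℝ) = ((k+j : ℕ) : ℝ) + 1 := by push_cast; ring
    rw [this, Real.Gamma_nat_eq_factorial]
  have hσh2 : (σh:ℝ)^2 ≠ 0 := by positivity
  have hσ2 : (σ:ℝ)^2 ≠ 0 := by positivity
  have hsum : (σ:ℝ)^2 + σh^2 ≠ 0 := by positivity
  have hlam' : lam = (σ^2 + σh^2) / (σ^2 * σh^2) := by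
    rw [hlam_def, hrh_def, hrY_def]
    field_simp
  have hone : (1:ℝ)/lam = σ^2*σh^2/(σ^2+σh^2) := by
    rw [hlam', one_div, inv_div]
  have e1 : rh * (σ^2*σh^2/(σ^2+σh^2)) = σ^2/(σ^2+σh^2) := by
    rw [hrh_def]; field_simp
  have e2 : rY * (σ^2*σh^2/(σ^2+σh^2)) = σh^2/(σ^2+σh^2) := by
    rw [hrY_def]; field_simp
  have step : ∀ A : ℝ, rh^(k+1) * rY^j / ((Nat.factorial k : ℝ) * (Nat.factorial j : ℝ)) *
      (A^(k+1) * A^j * (Nat.factorial (k+j) : ℝ))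
      = (rh*A)^(k+1) * ((Nat.factorial (k+j) : ℝ)/((Nat.factorial k : ℝ) * (Nat.factorial j : ℝ))
          * (rY*A)^j) := by
    intro A; rw [mul_pow, mul_pow]; ring
  rw [h1, h2, h3, h4]
  simp only [hC_def]
  rw [hone, pow_add (σ^2*σh^2/(σ^2+σh^2)) (k+1) j, step, e1, e2]

lemma integrableOn_g (k n : ℕ) {σh σ : ℝ} (hσh : 0 < σh) (hσ : 0 < σ) :
    IntegrableOn (fun x : ℝ => gammaPDFReal ((k+1 : ℕ) : ℝ) (σh^2)⁻¹ x *
        (Real.exp (-((σ^2)⁻¹ * x)) *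
          ∑ j ∈ Finset.range (n+1), ((σ^2)⁻¹ * x)^j / (Nat.factorial j : ℝ))) (Ioi 0) := by
  set rh : ℝ := (σh^2)⁻¹ with hrh_def
  set rY : ℝ := (σ^2)⁻¹ with hrY_def
  have hrh : 0 < rh := by positivity
  have hrY : 0 < rY := by positivity
  set lam : ℝ := rh + rY with hlam_def
  have hlam : 0 < lam := by positivity
  set C : ℕ → ℝ := fun j => rh^(k+1) * rY^j / ((Nat.factorial k : ℝ) * (Nat.factorial j : ℝ))
    with hC_def
  have hg : ∀ x ∈ Ioi (0:ℝ),
      gammaPDFReal ((k+1 : ℕ) : ℝ) rh x *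
        (Real.exp (-(rY * x)) * ∑ j ∈ Finset.range (n+1), (rY * x)^j / (Nat.factorial j : ℝ))
      = ∑ j ∈ Finset.range (n+1), C j * (x ^ (k+j) * Real.exp (-(lam * x))) := by
    intro x hx
    have hx0 : (0:ℝ) < x := hx
    rw [pdf_eq k hrh hx0.le, Finset.mul_sum, Finset.mul_sum]
    refine Finset.sum_congr rfl fun j _ => ?_
    have he : Real.exp (-(lam * x)) = Real.exp (-(rh*x)) * Real.exp (-(rY*x)) := by
      rw [← Real.exp_add]; congr 1; rw [hlam_def]; ring
    rw [he, hC_def]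
    have hk : (Nat.factorial k : ℝ) ≠ 0 := by exact_mod_cast (Nat.factorial_pos k).ne'
    have hj : (Nat.factorial j : ℝ) ≠ 0 := by exact_mod_cast (Nat.factorial_pos j).ne'
    rw [pow_add]
    field_simp
    ring
  have hint : IntegrableOn
      (fun x : ℝ => ∑ j ∈ Finset.range (n+1), C j * (x ^ (k+j) * Real.exp (-(lam * x))))
      (Ioi 0) :=
    integrable_finset_sum _ fun j _ => (integrableOn_pow_mul_exp_neg hlam).const_mul _
  exact hint.congr_fun (fun x hx => (hg x hx).symm) measurableSet_Ioi

end Stmt3Aux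

open Stmt3Aux in
/-- Let `X` be Gamma with shape `ks` and scale `σh²` (rate `1/σh²`) and let `Y = ‖Z‖²` be
an independent Gamma random variable with shape `m` and scale `σ²` (rate `1/σ²`). Then
`P(Y ≥ X) = (σ²/(σ² + σh²))^ks · ∑_{j=0}^{m-1} (Γ(ks+j)/(Γ(ks) j!)) (σh²/(σ²+σh²))^j`. -/
theorem stmt_3 {Ω : Type*} [MeasurableSpace Ω] (P : Measure Ω) [IsProbabilityMeasure P]
    (ks m : ℕ) (hks : 0 < ks) (hm : 0 < m) (σh σ : ℝ) (hσh : 0 < σh) (hσ : 0 < σ)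
    (X Y : Ω → ℝ) (hX : Measurable X) (hY : Measurable Y)
    (hlawX : Measure.map X P = gammaMeasure (ks : ℝ) (σh ^ 2)⁻¹)
    (hlawY : Measure.map Y P = gammaMeasure (m : ℝ) (σ ^ 2)⁻¹)
    (hindep : IndepFun X Y P) :
    P {ω | Y ω ≥ X ω} =
      ENNReal.ofReal
        ((σ ^ 2 / (σ ^ 2 + σh ^ 2)) ^ ks *
          ∑ j ∈ Finset.range m,
            Real.Gamma ((ks : ℝ) + (j : ℝ)) / (Real.Gamma (ks : ℝ) * (Nat.factorial j : ℝ)) *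
              (σh ^ 2 / (σ ^ 2 + σh ^ 2)) ^ j) := by
  obtain ⟨n, rfl⟩ : ∃ n, m = n + 1 := ⟨m - 1, by omega⟩
  obtain ⟨k, rfl⟩ : ∃ k, ks = k + 1 := ⟨ks - 1, by omega⟩
  have hrh : (0:ℝ) < (σh^2)⁻¹ := by positivity
  have hrY : (0:ℝ) < (σ^2)⁻¹ := by positivity
  have hset : MeasurableSet {p : ℝ × ℝ | p.1 ≤ p.2} :=
    measurableSet_le measurable_fst measurable_snd
  have hmap := (indepFun_iff_map_prod_eq_prod_map_map hX.aemeasurable hY.aemeasurable).mp hindep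
  have h1 : P {ω | Y ω ≥ X ω}
      = ((gammaMeasure ((k+1 : ℕ) : ℝ) (σh^2)⁻¹).prod
          (gammaMeasure ((n+1 : ℕ) : ℝ) (σ^2)⁻¹)) {p : ℝ × ℝ | p.1 ≤ p.2} := by
    rw [show {ω | Y ω ≥ X ω} = (fun ω => (X ω, Y ω)) ⁻¹' {p : ℝ × ℝ | p.1 ≤ p.2} from rfl,
      ← Measure.map_apply (hX.prodMk hY) hset, hmap, hlawX, hlawY]
  haveI : IsProbabilityMeasure (gammaMeasure ((n+1 : ℕ) : ℝ) (σ^2)⁻¹) :=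
    isProbabilityMeasure_gammaMeasure (by exact_mod_cast Nat.succ_pos n) hrY
  rw [h1, Measure.prod_apply hset]
  have hpre : ∀ x : ℝ, (Prod.mk x ⁻¹' {p : ℝ × ℝ | p.1 ≤ p.2}) = Ici x := fun x => rfl
  simp only [hpre]
  have hmeas : Measurable fun x : ℝ => gammaMeasure ((n+1 : ℕ) : ℝ) (σ^2)⁻¹ (Ici x) := by
    refine Antitone.measurable fun a b hab => ?_
    exact measure_mono (Ici_subset_Ici.mpr hab)
  rw [show gammaMeasure ((k+1 : ℕ) : ℝ) (σh^2)⁻¹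
      = volume.withDensity (gammaPDF ((k+1 : ℕ) : ℝ) (σh^2)⁻¹) from rfl,
    lintegral_withDensity_eq_lintegral_mul _
      (show Measurable (gammaPDF ((k+1 : ℕ) : ℝ) (σh^2)⁻¹) from
        (measurable_gammaPDFReal _ _).ennreal_ofReal) hmeas]
  simp only [Pi.mul_apply]
  rw [← lintegral_add_compl
    (fun x => gammaPDF ((k+1 : ℕ) : ℝ) (σh^2)⁻¹ x * gammaMeasure ((n+1 : ℕ) : ℝ) (σ^2)⁻¹ (Ici x))
    (measurableSet_Ici (a := (0:ℝ)))]
  have hcompl : ∫⁻ x in (Ici (0:ℝ))ᶜ,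
      gammaPDF ((k+1 : ℕ) : ℝ) (σh^2)⁻¹ x * gammaMeasure ((n+1 : ℕ) : ℝ) (σ^2)⁻¹ (Ici x) = 0 := by
    rw [compl_Ici,
      setLIntegral_congr_fun_ae measurableSet_Iio
        (ae_of_all _ fun x (hx : x < 0) => by rw [gammaPDF_of_neg hx, zero_mul]),
      lintegral_zero]
  set g : ℝ → ℝ := fun x => gammaPDFReal ((k+1 : ℕ) : ℝ) (σh^2)⁻¹ x *
      (Real.exp (-((σ^2)⁻¹ * x)) *
        ∑ j ∈ Finset.range (n+1), ((σ^2)⁻¹ * x)^j / (Nat.factorial j : ℝ)) with hg_def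
  have hkpos : (0:ℝ) < ((k+1 : ℕ) : ℝ) := by exact_mod_cast Nat.succ_pos k
  have hIci : ∫⁻ x in Ici (0:ℝ),
      gammaPDF ((k+1 : ℕ) : ℝ) (σh^2)⁻¹ x * gammaMeasure ((n+1 : ℕ) : ℝ) (σ^2)⁻¹ (Ici x)
      = ENNReal.ofReal (∫ x in Ioi (0:ℝ), g x) := by
    have hcong : ∀ᵐ (x : ℝ), x ∈ Ici (0:ℝ) →
        gammaPDF ((k+1 : ℕ) : ℝ) (σh^2)⁻¹ x * gammaMeasure ((n+1 : ℕ) : ℝ) (σ^2)⁻¹ (Ici x)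
          = ENNReal.ofReal (g x) := by
      refine ae_of_all _ fun x hx => ?_
      simp only [gammaPDF]
      rw [gammaMeasure_Ici n hrY hx, ← ENNReal.ofReal_mul (gammaPDFReal_nonneg hkpos hrh x)]
    rw [setLIntegral_congr_fun_ae (μ := volume) measurableSet_Ici hcong]
    have hintg : IntegrableOn g (Ici (0:ℝ)) := by
      rw [integrableOn_Ici_iff_integrableOn_Ioi]
      exact integrableOn_g k n hσh hσ
    have hnng : 0 ≤ᵐ[volume.restrict (Ici (0:ℝ))] g := by
      refine (ae_restrict_iff' measurableSet_Ici).mpr (ae_of_all _ fun x hx => ?_)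
      have h0x : (0:ℝ) ≤ x := hx
      refine mul_nonneg (gammaPDFReal_nonneg hkpos hrh x) (mul_nonneg (Real.exp_nonneg _) ?_)
      refine Finset.sum_nonneg fun j _ => ?_
      positivity
    rw [← ofReal_integral_eq_lintegral_ofReal hintg hnng, integral_Ici_eq_integral_Ioi]
  rw [hIci, hcompl, add_zero, hg_def]
  rw [main_integral k n hσh hσ]
end

section
/- Let X ≥ 0 have density f_X(x) = (∏_{i=0}^{k_s-1} σ_{h,i}^{-2}/Γ(k_s)) x^{k_s-1} on a neighborhood of 0 in the sense that ∫_0^∞ g(x) f(x) dx is evaluated with this density, and let G(x) = ∑_{j=0}^{m-1} x^j e^{-x/σ²}/(j! σ^{2j}). Then ∫_0^∞ G(x) · (∏ σ_{h,i}^{-2}/Γ(k_s)) x^{k_s-1} dx = (σ^{2k_s}/∏_{i=0}^{k_s-1} σ_{h,i}²) · ∑_{j=0}^{m-1} Γ(k_s+j)/(Γ(k_s) j!). -/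
open Finset MeasureTheory Set in
lemma stmt19_gamma_int (k j : ℕ) (hk : 0 < k) {r : ℝ} (hr : 0 < r) :
    ∫ x in Ioi (0:ℝ), x ^ (k - 1 + j) * Real.exp (-(r * x)) =
      (1 / r) ^ ((k:ℝ) + j) * Real.Gamma ((k:ℝ) + j) := by
  have ha : (0:ℝ) < (k:ℝ) + j := by positivity
  rw [← Real.integral_rpow_mul_exp_neg_mul_Ioi ha hr]
  apply setIntegral_congr_fun measurableSet_Ioi
  intro x hx
  have h1 : ((k:ℝ) + j) - 1 = ((k - 1 + j : ℕ) : ℝ) := by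
    have h1 : (1:ℕ) ≤ k := hk
    push_cast [h1]; ring
  simp only [h1, Real.rpow_natCast]

open Finset MeasureTheory Set in
lemma stmt19_integ (k j : ℕ) {r : ℝ} (hr : 0 < r) :
    IntegrableOn (fun x : ℝ => x ^ (k - 1 + j) * Real.exp (-(r * x))) (Ioi 0) := by
  have h := integrableOn_rpow_mul_exp_neg_mul_rpow (p := 1)
    (s := ((k - 1 + j : ℕ) : ℝ)) (b := r) (neg_one_lt_zero.trans_le (Nat.cast_nonneg _)) one_pos hr
  apply h.congr_fun ?_ measurableSet_Ioi
  intro x hx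
  simp only [Real.rpow_one, Real.rpow_natCast, neg_mul]


open Finset

/-- Termwise Gamma integration:
`∫_0^∞ (∑_{j<m} x^j e^(-x/σ²)/(j! σ^(2j))) · ((∏_i σ_{h,i}^{-2})/Γ(ks)) x^(ks-1) dx
 = (σ^(2ks)/∏_i σ_{h,i}²) · ∑_{j<m} Γ(ks+j)/(Γ(ks) j!)`. -/
theorem stmt_19 (m ks : ℕ) (hm : 0 < m) (hks : 0 < ks)
    (σ : ℝ) (hσ : 0 < σ) (σh : ℕ → ℝ) (hσh : ∀ i, 0 < σh i) :
    ∫ x in Set.Ioi (0 : ℝ),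
        (∑ j ∈ Finset.range m,
            x ^ j * Real.exp (-x / σ ^ 2) / ((Nat.factorial j : ℝ) * σ ^ (2 * j))) *
          ((∏ i ∈ Finset.range ks, ((σh i) ^ 2)⁻¹) / Real.Gamma ks * x ^ (ks - 1)) =
      (σ ^ (2 * ks) / ∏ i ∈ Finset.range ks, (σh i) ^ 2) *
        ∑ j ∈ Finset.range m,
          Real.Gamma ((ks : ℝ) + (j : ℝ)) / (Real.Gamma (ks : ℝ) * (Nat.factorial j : ℝ)) := by
  have hσ2 : (0:ℝ) < σ ^ 2 := by positivity
  have hr : (0:ℝ) < (σ ^ 2)⁻¹ := by positivity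
  have hP : (0:ℝ) < ∏ i ∈ Finset.range ks, (σh i) ^ 2 := by
    exact Finset.prod_pos fun i _ => pow_pos (hσh i) 2
  have hG : 0 < Real.Gamma ks := Real.Gamma_pos_of_pos (by exact_mod_cast hks)
  set C : ℝ := (∏ i ∈ Finset.range ks, ((σh i) ^ 2)⁻¹) / Real.Gamma ks with hC
  have hstep : (∫ x in Set.Ioi (0 : ℝ),
        (∑ j ∈ Finset.range m,
            x ^ j * Real.exp (-x / σ ^ 2) / ((Nat.factorial j : ℝ) * σ ^ (2 * j))) *
          (C * x ^ (ks - 1)))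
      = ∫ x in Set.Ioi (0 : ℝ), ∑ j ∈ Finset.range m,
          (C / ((Nat.factorial j : ℝ) * σ ^ (2 * j))) *
            (x ^ (ks - 1 + j) * Real.exp (-((σ ^ 2)⁻¹ * x))) := by
    apply MeasureTheory.setIntegral_congr_fun measurableSet_Ioi
    intro x hx
    dsimp only
    rw [Finset.sum_mul]
    apply Finset.sum_congr rfl
    intro j _
    have : -x / σ ^ 2 = -((σ ^ 2)⁻¹ * x) := by field_simp
    rw [this, pow_add]
    ring
  rw [hstep, MeasureTheory.integral_finset_sum _
    (fun j _ => (stmt19_integ ks j hr).const_mul _)]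
  simp_rw [MeasureTheory.integral_const_mul, stmt19_gamma_int ks _ hks hr]
  rw [Finset.mul_sum]
  apply Finset.sum_congr rfl
  intro j _
  have h1 : (1 : ℝ) / (σ ^ 2)⁻¹ = σ ^ 2 := by
    rw [one_div, inv_inv]
  have h2 : ((σ:ℝ) ^ 2) ^ ((ks:ℝ) + (j:ℝ)) = σ ^ (2 * (ks + j)) := by
    rw [show ((ks:ℝ) + (j:ℝ)) = ((ks + j : ℕ) : ℝ) by push_cast; ring,
      Real.rpow_natCast, ← pow_mul]
  rw [h1, h2, hC, Finset.prod_inv_distrib]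
  have hfac : (0:ℝ) < (Nat.factorial j : ℝ) := by positivity
  field_simp
  ring
end
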